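/- Let B̄ be a standardized max-linear coefficient matrix of a recursive max-weighted model on a DAG D (b̄_{ji} = b̄_{jk}b̄_{ki}/b̄_{kk} along all paths). Then the minimum max-linear DAG of B̄ (the DAG with an edge k → i iff the edge k → i of D is the unique max-weighted path from k to i) equals the transitive reduction of D, i.e., the DAG obtained from D by deleting every edge k → i for which D contains another directed path from k to i. -/

import Mathlib

open Finset
open scoped Classical

/-- `anc E j i`: there is a directed path (length ≥ 1) from `j` to `i`, i.e. `j` is a
strict ancestor of `i` in the directed graph with edge relation `E`. -/
def anc {d : ℕ} (E : Fin d → Fin d → Prop) (j i : Fin d) : Prop :=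
  Relation.TransGen E j i

/-- `Anc E j i`: `j` is an ancestor of `i`, including `j = i`. -/
def Anc {d : ℕ} (E : Fin d → Fin d → Prop) (j i : Fin d) : Prop :=
  j = i ∨ Relation.TransGen E j i

/-- The tail dependence coefficient associated to a (standardized) max-linear
coefficient matrix `B`: `χ(i,j) = ∑_{k ∈ An(i) ∩ An(j)} min (B k i) (B k j)`. -/
noncomputable def tdc {d : ℕ} (E : Fin d → Fin d → Prop)
    (B : Matrix (Fin d) (Fin d) ℝ) (i j : Fin d) : ℝ :=
  ∑ k ∈ Finset.univ.filter (fun k => Anc E k i ∧ Anc E k j), min (B k i) (B k j)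

/-- `isPathList E j i p`: `p` is (the list of nodes of) a directed path from `j` to `i`
in the graph with edge relation `E` (at least one edge). -/
def isPathList {d : ℕ} (E : Fin d → Fin d → Prop) (j i : Fin d)
    (p : List (Fin d)) : Prop :=
  p.Chain' E ∧ p.head? = some j ∧ p.getLast? = some i ∧ 2 ≤ p.length

/-- The weight of a path `p = [k₀, …, kₙ]` with respect to the standardized
coefficient matrix `B`: `b̄_{k₀k₀} ∏_ν (b̄_{k_ν k_{ν+1}} / b̄_{k_ν k_ν})`. -/
noncomputable def pathWeight {d : ℕ} (B : Matrix (Fin d) (Fin d) ℝ)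
    (p : List (Fin d)) : ℝ :=
  (match p.head? with
   | some j => B j j
   | none => 1) *
  ((p.zip p.tail).map (fun q => B q.1 q.2 / B q.1 q.1)).prod

lemma tg_path {d : ℕ} {E : Fin d → Fin d → Prop} {j i : Fin d}
    (h : Relation.TransGen E j i) : ∃ p, isPathList E j i p := by
  induction h with
  | single h =>
    rename_i b
    exact ⟨[j, b], by simp [isPathList, List.Chain', h]⟩
  | tail h' h ih =>
    rename_i b c
    obtain ⟨p, hc, hh, hl, hlen⟩ := ih
    obtain ⟨a, t, rfl⟩ : ∃ a t, p = a :: t := by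
      cases p with
      | nil => simp at hh
      | cons a t => exact ⟨a, t, rfl⟩
    refine ⟨(a :: t) ++ [c], ?_, ?_, ?_, ?_⟩
    · unfold List.Chain'; rw [List.isChain_append]
      refine ⟨hc, List.isChain_singleton _, ?_⟩
      intro x hx y hy
      simp at hy
      rw [hl] at hx
      simp at hx
      subst hx; subst hy; exact h
    · simpa using hh
    · show ((a :: t) ++ [c]).getLast? = some c
      rw [List.getLast?_append]
      simp
    · simp

lemma path_tg {d : ℕ} {E : Fin d → Fin d → Prop} :
    ∀ (p : List (Fin d)) {j i : Fin d}, isPathList E j i p → Relation.TransGen E j i := by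
  intro p
  induction p with
  | nil => intro j i h; simp [isPathList] at h
  | cons a t ih =>
    intro j i h
    obtain ⟨hc, hh, hl, hlen⟩ := h
    simp at hh; subst hh
    cases t with
    | nil => simp at hlen
    | cons b s =>
      have hab := (List.isChain_cons_cons.mp hc).1
      cases s with
      | nil =>
        simp at hl; subst hl
        exact Relation.TransGen.single hab
      | cons c r =>
        have : isPathList E b i (b :: c :: r) := by
          refine ⟨(List.isChain_cons_cons.mp hc).2, rfl, ?_, by simp⟩
          simpa using hl
        exact Relation.TransGen.head hab (ih this)

lemma path_append {d : ℕ} {E : Fin d → Fin d → Prop} {k m i : Fin d}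
    {p1 p2 : List (Fin d)} (h1 : isPathList E k m p1) (h2 : isPathList E m i p2) :
    ∃ q, isPathList E k i q ∧ 3 ≤ q.length := by
  obtain ⟨hc1, hh1, hl1, hlen1⟩ := h1
  obtain ⟨hc2, hh2, hl2, hlen2⟩ := h2
  obtain ⟨a, t, rfl⟩ : ∃ a t, p2 = a :: t := by
    cases p2 with
    | nil => simp at hh2
    | cons a t => exact ⟨a, t, rfl⟩
  simp at hh2; subst hh2
  have ht : t ≠ [] := by intro h; subst h; simp at hlen2
  refine ⟨p1 ++ t, ⟨?_, ?_, ?_, ?_⟩, ?_⟩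
  · unfold List.Chain'; rw [List.isChain_append]
    refine ⟨hc1, (List.isChain_cons.mp hc2).2, ?_⟩
    intro x hx y hy
    rw [hl1] at hx; simp at hx; subst hx
    exact (List.isChain_cons.mp hc2).1 y hy
  · obtain ⟨a1, t1, rfl⟩ : ∃ a1 t1, p1 = a1 :: t1 := by
      cases p1 with
      | nil => simp at hh1
      | cons a1 t1 => exact ⟨a1, t1, rfl⟩
    simpa using hh1
  · rw [List.getLast?_append]
    cases t with
    | nil => exact absurd rfl ht
    | cons x u =>
      simp only [List.getLast?_cons_cons] at hl2
      simp [hl2]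
  · rw [List.length_append]
    have : 1 ≤ t.length := List.length_pos_iff.mpr ht
    simp at hlen2
    omega
  · rw [List.length_append]
    have : 1 ≤ t.length := List.length_pos_iff.mpr ht
    omega

theorem stmt17 {d : ℕ} (E : Fin d → Fin d → Prop)
    (hacyc : ∀ i, ¬ anc E i i)
    (B : Matrix (Fin d) (Fin d) ℝ)
    (hnn : ∀ j i, 0 ≤ B j i)
    (hsgn : ∀ j i, 0 < B j i ↔ Anc E j i)
    (hcol : ∀ i, ∑ k ∈ Finset.univ.filter (fun k => Anc E k i), B k i = 1)
    -- every path of `D` is max-weighted: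
    (hmwAll : ∀ j i p, isPathList E j i p → B j i = pathWeight B p) :
    -- the minimum ML DAG (edge `k → i` of `D` is the unique max-weighted path
    -- from `k` to `i`) equals the transitive reduction of `D`:
    ∀ k i : Fin d,
      (E k i ∧ ∀ p, isPathList E k i p → B k i = pathWeight B p → p = [k, i]) ↔
      (E k i ∧ ¬ ∃ m, Relation.TransGen E k m ∧ Relation.TransGen E m i) := by
  intro k i
  constructor
  · rintro ⟨he, huniq⟩
    refine ⟨he, ?_⟩
    rintro ⟨m, hkm, hmi⟩
    obtain ⟨p1, hp1⟩ := tg_path hkm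
    obtain ⟨p2, hp2⟩ := tg_path hmi
    obtain ⟨q, hq, hqlen⟩ := path_append hp1 hp2
    have := huniq q hq (hmwAll k i q hq)
    subst this
    simp at hqlen
  · rintro ⟨he, hno⟩
    refine ⟨he, ?_⟩
    intro p hp _
    obtain ⟨hc, hh, hl, hlen⟩ := hp
    obtain ⟨a, t, rfl⟩ : ∃ a t, p = a :: t := by
      cases p with
      | nil => simp at hh
      | cons a t => exact ⟨a, t, rfl⟩
    simp at hh; subst hh
    cases t with
    | nil => simp at hlen
    | cons b s =>
      cases s with
      | nil => simp at hl; subst hl; rfl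
      | cons c r =>
        exfalso
        apply hno
        refine ⟨b, Relation.TransGen.single (List.isChain_cons_cons.mp hc).1, ?_⟩
        apply path_tg (b :: c :: r)
        refine ⟨(List.isChain_cons_cons.mp hc).2, rfl, ?_, by simp⟩
        simpa using hl
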